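/- Suppose ξ = ξ' > 0 and z = √2·cosh(ξ+iη), z' = √2·cosh(ξ+iη'). Then for all s on the circle |s| = |a|⁻¹ = e^{-2ξ} one has Re F(s) ≤ Re F(a⁻¹), with equality if and only if s = a⁻¹. -/

import Mathlib

noncomputable def Fphase (τ : ℝ) (z z' : ℂ) (s : ℂ) : ℂ :=
  s * (z + z') ^ 2 / (2 * (1 + s)) - s * (z - z') ^ 2 / (2 * (1 - s))
    - Complex.log s + Complex.log (τ : ℂ)

open Complex in
lemma key_re_plus (a t : ℂ) (ht : normSq t = 1) (h : a + t ≠ 0) :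
    ((1 - t) * (a + 1) / (a + t)).re
      = (normSq a - 1) * (1 - t.re) / normSq (a + t) := by
  have ht' : t.re * t.re + t.im * t.im = 1 := by rwa [Complex.normSq_apply] at ht
  have hnum : ((1 - t) * (a + 1)).re * (a + t).re + ((1 - t) * (a + 1)).im * (a + t).im
      = (normSq a - 1) * (1 - t.re) := by
    simp only [Complex.mul_re, Complex.mul_im, Complex.sub_re, Complex.sub_im,
      Complex.add_re, Complex.add_im, Complex.one_re, Complex.one_im, Complex.normSq_apply]
    linear_combination (-a.re - 1) * ht'
  rw [Complex.div_re, ← add_div, hnum]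

open Complex in
lemma key_re_minus (a t : ℂ) (ht : normSq t = 1) (h : a - t ≠ 0) :
    ((1 - t) * (a - 1) / (a - t)).re
      = (normSq a - 1) * (1 - t.re) / normSq (a - t) := by
  have ht' : t.re * t.re + t.im * t.im = 1 := by rwa [Complex.normSq_apply] at ht
  have hnum : ((1 - t) * (a - 1)).re * (a - t).re + ((1 - t) * (a - 1)).im * (a - t).im
      = (normSq a - 1) * (1 - t.re) := by
    simp only [Complex.mul_re, Complex.mul_im, Complex.sub_re, Complex.sub_im,
      Complex.add_re, Complex.add_im, Complex.one_re, Complex.one_im, Complex.normSq_apply]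
    linear_combination (a.re - 1) * ht'
  rw [Complex.div_re, ← add_div, hnum]

set_option maxHeartbeats 1000000 in
theorem ReF_max_on_circle_same_ellipse (τ ξ η η' : ℝ) (hτ : 0 < τ) (hτ1 : τ ≤ 1)
    (hξ : 0 < ξ) (z z' a : ℂ)
    (hz : z = (Real.sqrt 2 : ℂ) * Complex.cosh ((ξ : ℂ) + (η : ℂ) * Complex.I))
    (hz' : z' = (Real.sqrt 2 : ℂ) * Complex.cosh ((ξ : ℂ) + (η' : ℂ) * Complex.I))
    (ha : a = Complex.exp ((2 * ξ : ℂ) + ((η : ℂ) + (η' : ℂ)) * Complex.I)) :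
    ∀ s : ℂ, ‖s‖ = Real.exp (-2 * ξ) →
      (Fphase τ z z' s).re ≤ (Fphase τ z z' a⁻¹).re ∧
      ((Fphase τ z z' s).re = (Fphase τ z z' a⁻¹).re ↔ s = a⁻¹) := by
  intro s hs
  have habs : ‖a‖ = Real.exp (2 * ξ) := by
    rw [ha, Complex.norm_exp]; congr 1; simp
  have ha0 : a ≠ 0 := by rw [ha]; exact Complex.exp_ne_zero _
  have hlt1 : Real.exp (-2 * ξ) < 1 := by
    rw [Real.exp_lt_one_iff]; linarith
  have hlt1' : Real.exp (-(2 * ξ)) < 1 := by rw [← neg_mul]; exact hlt1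
  have hgt1 : 1 < Real.exp (2 * ξ) := by
    rw [Real.one_lt_exp_iff]; linarith
  have hs0 : s ≠ 0 := by
    intro h; rw [h, norm_zero] at hs; exact (Real.exp_pos _).ne' hs.symm
  -- t on the unit circle
  set t : ℂ := a * s with htdef
  have hts : s = a⁻¹ * t := by field_simp [htdef]; rw [htdef]; ring
  have htabs : ‖t‖ = 1 := by
    rw [htdef, norm_mul, habs, hs, ← Real.exp_add]
    norm_num
  have hnt : Complex.normSq t = 1 := by
    rw [← Complex.sq_norm, htabs]; norm_num
  -- nonvanishing facts
  have h1ps : (1 : ℂ) + s ≠ 0 := by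
    intro h
    have : s = -1 := by linear_combination h
    rw [this] at hs; simp at hs; linarith [hlt1']
  have h1ms : (1 : ℂ) - s ≠ 0 := by
    intro h
    have : s = 1 := by linear_combination -h
    rw [this] at hs; simp at hs; linarith [hlt1']
  have hainv : ‖a⁻¹‖ = Real.exp (-2 * ξ) := by
    rw [norm_inv, habs, ← Real.exp_neg]; norm_num
  have ha1p : a + 1 ≠ 0 := by
    intro h
    have : a = -1 := by linear_combination h
    rw [this] at habs; simp at habs; linarith
  have ha1m : a - 1 ≠ 0 := by
    intro h
    have : a = 1 := by linear_combination h
    rw [this] at habs; simp at habs; linarith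
  have hat : a + t ≠ 0 := by
    have : a + t = a * (1 + s) := by rw [htdef]; ring
    rw [this]; exact mul_ne_zero ha0 h1ps
  have hmt : a - t ≠ 0 := by
    have : a - t = a * (1 - s) := by rw [htdef]; ring
    rw [this]; exact mul_ne_zero ha0 h1ms
  have h1pa : (1 : ℂ) + a⁻¹ ≠ 0 := by
    intro h
    have : a⁻¹ = -1 := by linear_combination h
    rw [this] at hainv; simp at hainv; linarith [hlt1']
  have h1ma : (1 : ℂ) - a⁻¹ ≠ 0 := by
    intro h
    have : a⁻¹ = 1 := by linear_combination -h
    rw [this] at hainv; simp at hainv; linarith [hlt1']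
  -- exponentials p, q
  set p : ℂ := Complex.exp ((ξ : ℂ) + (η : ℂ) * Complex.I) with hpdef
  set q : ℂ := Complex.exp ((ξ : ℂ) + (η' : ℂ) * Complex.I) with hqdef
  have hp0 : p ≠ 0 := Complex.exp_ne_zero _
  have hq0 : q ≠ 0 := Complex.exp_ne_zero _
  have hapq : a = p * q := by
    rw [ha, hpdef, hqdef, ← Complex.exp_add]; congr 1; ring
  have hzp : z = (Real.sqrt 2 : ℂ) * (p + p⁻¹) / 2 := by
    rw [hz, Complex.cosh, Complex.exp_neg, hpdef]; ring
  have hzq : z' = (Real.sqrt 2 : ℂ) * (q + q⁻¹) / 2 := by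
    rw [hz', Complex.cosh, Complex.exp_neg, hqdef]; ring
  have h2 : ((Real.sqrt 2 : ℝ) : ℂ) ^ 2 = 2 := by
    norm_cast
    exact Real.sq_sqrt (by norm_num)
  -- the real coefficients C and D
  obtain ⟨C, hCdef⟩ : ∃ C : ℝ, C = (1 + Real.cos (η - η')) / 2 := ⟨_, rfl⟩
  obtain ⟨D, hDdef⟩ : ∃ D : ℝ, D = (1 - Real.cos (η - η')) / 2 := ⟨_, rfl⟩
  have hpq : p / q = Complex.exp (((η : ℂ) - (η' : ℂ)) * Complex.I) := by
    rw [hpdef, hqdef, ← Complex.exp_sub]; congr 1; ring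
  have hqp : q / p = Complex.exp (-((η : ℂ) - (η' : ℂ)) * Complex.I) := by
    rw [hpdef, hqdef, ← Complex.exp_sub]; congr 1; ring
  have hcos : Complex.cos ((η : ℂ) - (η' : ℂ)) = (p / q + q / p) / 2 := by
    rw [Complex.cos, hpq, hqp]
  have hCc : ((C : ℝ) : ℂ) = (2 + p / q + q / p) / 4 := by
    rw [hCdef]; push_cast; rw [hcos]
    ring
  have hDc : ((D : ℝ) : ℂ) = (2 - p / q - q / p) / 4 := by
    rw [hDdef]; push_cast; rw [hcos]
    ring
  -- key algebraic identities for (z ± z')²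
  have hzz : (z + z') ^ 2 = 2 * ((p + p⁻¹ + q + q⁻¹) / 2) ^ 2 := by
    rw [hzp, hzq, show ((Real.sqrt 2 : ℝ) : ℂ) * (p + p⁻¹) / 2 + ((Real.sqrt 2 : ℝ) : ℂ) * (q + q⁻¹) / 2
      = ((Real.sqrt 2 : ℝ) : ℂ) * ((p + p⁻¹ + q + q⁻¹) / 2) by ring, mul_pow, h2]
  have hzz' : (z - z') ^ 2 = 2 * ((p + p⁻¹ - q - q⁻¹) / 2) ^ 2 := by
    rw [hzp, hzq, show ((Real.sqrt 2 : ℝ) : ℂ) * (p + p⁻¹) / 2 - ((Real.sqrt 2 : ℝ) : ℂ) * (q + q⁻¹) / 2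
      = ((Real.sqrt 2 : ℝ) : ℂ) * ((p + p⁻¹ - q - q⁻¹) / 2) by ring, mul_pow, h2]
  have hP : (z + z') ^ 2 = 2 * (C : ℂ) * (a + 1) ^ 2 / a := by
    rw [hzz, hCc, hapq]
    field_simp
    ring
  have hQ : (z - z') ^ 2 = -2 * (D : ℂ) * (a - 1) ^ 2 / a := by
    rw [hzz', hDc, hapq]
    field_simp
    ring
  -- main complex difference identity
  have h1pat : (1 : ℂ) + a⁻¹ * t ≠ 0 := by rw [← hts]; exact h1ps
  have h1mat : (1 : ℂ) - a⁻¹ * t ≠ 0 := by rw [← hts]; exact h1ms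
  have hdiff :
      (a⁻¹ * (z + z') ^ 2 / (2 * (1 + a⁻¹)) - a⁻¹ * (z - z') ^ 2 / (2 * (1 - a⁻¹)))
        - (s * (z + z') ^ 2 / (2 * (1 + s)) - s * (z - z') ^ 2 / (2 * (1 - s)))
      = (C : ℂ) * ((1 - t) * (a + 1) / (a + t)) + (D : ℂ) * ((1 - t) * (a - 1) / (a - t)) := by
    have haas : a + a * s ≠ 0 := by
      rw [show a + a * s = a * (1 + s) by ring]; exact mul_ne_zero ha0 h1ps
    have hams : a - a * s ≠ 0 := by
      rw [show a - a * s = a * (1 - s) by ring]; exact mul_ne_zero ha0 h1ms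
    have c1 : a⁻¹ * (z + z') ^ 2 / (2 * (1 + a⁻¹)) = (C : ℂ) * (a + 1) / a := by
      rw [hP]; field_simp
    have c2 : a⁻¹ * (z - z') ^ 2 / (2 * (1 - a⁻¹)) = -((D : ℂ) * (a - 1) / a) := by
      rw [hQ]; field_simp
    have c3 : s * (z + z') ^ 2 / (2 * (1 + s)) = (C : ℂ) * (a + 1) ^ 2 * t / (a * (a + t)) := by
      rw [hP, htdef]; field_simp
    have c4 : s * (z - z') ^ 2 / (2 * (1 - s)) = -((D : ℂ) * (a - 1) ^ 2 * t / (a * (a - t))) := by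
      rw [hQ, htdef]; field_simp
    rw [c1, c2, c3, c4]
    field_simp
    ring
  -- real part of the difference
  have hre : (Fphase τ z z' a⁻¹).re - (Fphase τ z z' s).re
      = (Complex.normSq a - 1) * (1 - t.re) * (C / Complex.normSq (a + t) + D / Complex.normSq (a - t)) := by
    have hlog1 : (Complex.log s).re = Real.log (Real.exp (-2 * ξ)) := by
      rw [Complex.log_re, hs]
    have hlog2 : (Complex.log a⁻¹).re = Real.log (Real.exp (-2 * ξ)) := by
      rw [Complex.log_re, hainv]
    have e1 : (Fphase τ z z' a⁻¹).re - (Fphase τ z z' s).re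
        = ((a⁻¹ * (z + z') ^ 2 / (2 * (1 + a⁻¹)) - a⁻¹ * (z - z') ^ 2 / (2 * (1 - a⁻¹)))
          - (s * (z + z') ^ 2 / (2 * (1 + s)) - s * (z - z') ^ 2 / (2 * (1 - s)))).re := by
      simp only [Fphase, Complex.sub_re, Complex.add_re, hlog1, hlog2]
      ring
    rw [e1, hdiff]
    simp only [Complex.add_re, Complex.re_ofReal_mul]
    rw [key_re_plus a t hnt hat, key_re_minus a t hnt hmt]
    ring
  -- positivity
  have hnsa : Complex.normSq a - 1 > 0 := by
    rw [← Complex.sq_norm, habs]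
    nlinarith
  have hn1 : 0 < Complex.normSq (a + t) := Complex.normSq_pos.mpr hat
  have hn2 : 0 < Complex.normSq (a - t) := Complex.normSq_pos.mpr hmt
  have hC0 : 0 ≤ C := by
    have := Real.neg_one_le_cos (η - η'); rw [hCdef]; linarith
  have hD0 : 0 ≤ D := by
    have := Real.cos_le_one (η - η'); rw [hDdef]; linarith
  have hCD : C + D = 1 := by rw [hCdef, hDdef]; ring
  have hB : 0 < C / Complex.normSq (a + t) + D / Complex.normSq (a - t) := by
    rw [div_add_div _ _ hn1.ne' hn2.ne']
    apply div_pos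
    · rcases hC0.lt_or_eq with h | h
      · nlinarith [mul_pos h hn2, mul_nonneg hD0 hn1.le]
      · have hD1 : D = 1 := by linarith
        rw [← h, hD1]; nlinarith
    · positivity
  have htre : t.re ≤ 1 := by
    calc t.re ≤ ‖t‖ := Complex.re_le_norm t
    _ = 1 := htabs
  have hts1 : t = 1 ↔ s = a⁻¹ := by
    constructor
    · intro h; rw [hts, h, mul_one]
    · intro h; rw [htdef, h, mul_inv_cancel₀ ha0]
  constructor
  · nlinarith [hre, mul_pos hnsa hB]
  · constructor
    · intro h
      have h0 : (Complex.normSq a - 1) * (1 - t.re)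
          * (C / Complex.normSq (a + t) + D / Complex.normSq (a - t)) = 0 := by
        rw [← hre]; linarith
      have htr1 : t.re = 1 := by
        rcases mul_eq_zero.mp h0 with h' | h'
        · rcases mul_eq_zero.mp h' with h'' | h''
          · linarith
          · linarith
        · linarith
      have htim : t.im = 0 := by
        have := Complex.normSq_apply t
        rw [hnt, htr1] at this
        nlinarith
      rw [← hts1]
      exact Complex.ext (by simp [htr1]) (by simp [htim])
    · intro h
      rw [h]
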